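/- Let g ≥ 2 and 1 ≤ n ≤ g+1 be integers. (i) For all real t ∈ (0,1): (1−t) · P²ℝ_{g,n}(t) = (1+t)^{g+n−2}(1+t³)^{g−n+1} · Σ_{i=0}^{n−2}(1+t²)^{n−2−i}(2t)^{i} + (1+t)^{g+n−1}(2t)^{n−1} · Σ_{i=0}^{g−n}(1+t³)^{g−n−i}(t+t²)^{i}, where a sum whose upper index is smaller than its lower index is 0. (ii) Consequently (1−t) · P²ℝ_{g,n}(t) tends to (2g−n+1)·2^{2g+n−3} as t → 1⁻. -/

import Mathlib

open Finset

noncomputable section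

/-- `ang x` is `⟨x⟩ = ⌊x⌋ + 1 - x`, the unique element of `(0,1]` with `x + ⟨x⟩ ∈ ℤ`. -/
def ang (x : ℝ) : ℝ := (⌊x⌋ : ℝ) + 1 - x

/-- `P²ℝ_{g,n}(t)`, the mod 2 equivariant Poincaré series of semistable real holomorphic
structures of rank 2 and degree 1 on a Klein surface of type `(g,n,a)`, `n > 0`. -/
def P2R (g n : ℕ) (t : ℝ) : ℝ :=
  (1+t)^(g+n+1) * (1+t^2)^n * (1+t^3)^(g+1-n) / ((1-t^2)^2 * (1-t^4)) -
    2^(n-1) * (1+t)^(2*g+2) * t^g / (1-t^2)^3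

lemma geom_aux' (x y : ℝ) (p : ℕ) :
    (∑ i ∈ Finset.range p, y ^ (p - 1 - i) * x ^ i) * (x - y) = x ^ p - y ^ p := by
  rw [← geom_sum₂_mul x y p]
  congr 1
  exact Finset.sum_congr rfl fun i _ => mul_comm _ _

lemma half_pow (p : ℕ) : (p:ℝ) * 2^(p-1) = p * 2^p / 2 := by
  rcases p with _ | q
  · simp
  · rw [Nat.succ_sub_one, pow_succ]
    push_cast
    ring

lemma main_id (p m b : ℕ) (hb : b + 1 = 2*p + m) :
    ∀ t ∈ Set.Ioo (0:ℝ) 1,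
      (1 - t) * P2R (p+m) (p+1) t =
        (1+t)^b * (1+t^3)^m *
          (∑ i ∈ Finset.range p, (1+t^2)^(p-1-i) * (2*t)^i) +
        (1+t)^(b+1) * (2*t)^p *
          (∑ i ∈ Finset.range m, (1+t^3)^(m-1-i) * (t+t^2)^i) := by
  intro t ht
  obtain ⟨ht0, ht1⟩ := ht
  have h1t : (1:ℝ) - t ≠ 0 := by nlinarith
  have h1t2 : (1:ℝ) - t^2 ≠ 0 := by nlinarith
  have h1t4 : (1:ℝ) - t^4 ≠ 0 := by
    have : (0:ℝ) < 1 - t^4 := by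
      nlinarith [mul_pos (show (0:ℝ) < 1 - t^2 by nlinarith)
        (show (0:ℝ) < 1 + t^2 by positivity)]
    linarith
  have h1 : (1-t)^2 * ∑ i ∈ Finset.range p, (1+t^2)^(p-1-i) * (2*t)^i
      = (1+t^2)^p - (2*t)^p := by
    have h := geom_aux' (2*t) (1+t^2) p
    linear_combination -h
  have h2 : (1-t)^2*(1+t) * ∑ i ∈ Finset.range m, (1+t^3)^(m-1-i) * (t+t^2)^i
      = (1+t^3)^m - (t+t^2)^m := by
    have h := geom_aux' (t+t^2) (1+t^3) m
    linear_combination -h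
  have hP : (1-t) * P2R (p+m) (p+1) t =
      (1+t)^b * ((1+t^2)^p * (1+t^3)^m - 2^p * t^(p+m) * (1+t)^m) / (1-t)^2 := by
    rw [P2R]
    rw [show (p+m)+(p+1)+1 = b+3 by omega, show (p+m)+1-(p+1) = m by omega,
      show (p+1)-1 = p by omega, show 2*(p+m)+2 = b+m+3 by omega]
    field_simp
    ring
  have h3 : (t+t^2)^m = t^m*(1+t)^m := by
    rw [show t+t^2 = t*(1+t) by ring, mul_pow]
  rw [hP, div_eq_iff (pow_ne_zero 2 h1t)]
  linear_combination (-(1+t)^b*(1+t^3)^m) * h1 + (-(1+t)^b*(2*t)^p) * h2 +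
    (t^p*(1+t)^b*2^p) * h3

lemma limit_val (p m b c : ℕ) (hb : b + 1 = 2*p + m) (hc : c + 2 = 3*p + 2*m) :
    (1+1:ℝ)^b * (1+1^3)^m *
        (∑ i ∈ Finset.range p, ((1:ℝ)+1^2)^(p-1-i) * (2*1)^i) +
      (1+1:ℝ)^(b+1) * (2*1)^p *
        (∑ i ∈ Finset.range m, ((1:ℝ)+1^3)^(m-1-i) * (1+1^2)^i) =
      ((p + 2*m : ℕ) : ℝ) * 2^c := by
  have s1 : (∑ i ∈ Finset.range p, ((1:ℝ)+1^2)^(p-1-i) * (2*1)^i) = (p:ℝ) * 2^(p-1) := by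
    have h : ∀ i ∈ Finset.range p, ((1:ℝ)+1^2)^(p-1-i) * (2*1)^i = 2^(p-1) := by
      intro i hi
      have := Finset.mem_range.mp hi
      norm_num
      rw [← pow_add]
      congr 1
      omega
    rw [Finset.sum_congr rfl h, Finset.sum_const, Finset.card_range, nsmul_eq_mul]
  have s2 : (∑ i ∈ Finset.range m, ((1:ℝ)+1^3)^(m-1-i) * (1+1^2)^i) = (m:ℝ) * 2^(m-1) := by
    have h : ∀ i ∈ Finset.range m, ((1:ℝ)+1^3)^(m-1-i) * (1+1^2)^i = 2^(m-1) := by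
      intro i hi
      have := Finset.mem_range.mp hi
      norm_num
      rw [← pow_add]
      congr 1
      omega
    rw [Finset.sum_congr rfl h, Finset.sum_const, Finset.card_range, nsmul_eq_mul]
  rw [s1, s2, half_pow p, half_pow m]
  have hbp : (2:ℝ)^b = 2^(2*p+m) / 2 := by
    rw [eq_div_iff (two_ne_zero), ← pow_succ, hb]
  have hcp : (2:ℝ)^c = 2^(3*p+2*m) / 4 := by
    rw [eq_div_iff (by norm_num : (4:ℝ) ≠ 0), show (4:ℝ) = 2^2 by norm_num, ← pow_add, hc]
  norm_num
  rw [pow_succ, hbp, hcp]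
  ring

/-- The total mod 2 Betti number of a connected component of the real points of the moduli
space of rank 2, degree 1 stable bundles on a real curve of type `(g,n,a)`, `n > 0`. -/
theorem stmt15 (g n : ℕ) (hg : 2 ≤ g) (hn1 : 1 ≤ n) (hn : n ≤ g + 1) :
    (∀ t ∈ Set.Ioo (0:ℝ) 1,
      (1 - t) * P2R g n t =
        (1+t)^(g+n-2) * (1+t^3)^(g+1-n) *
          (∑ i ∈ Finset.range (n-1), (1+t^2)^(n-2-i) * (2*t)^i) +
        (1+t)^(g+n-1) * (2*t)^(n-1) *
          (∑ i ∈ Finset.range (g+1-n), (1+t^3)^(g-n-i) * (t+t^2)^i)) ∧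
    Filter.Tendsto (fun t : ℝ => (1 - t) * P2R g n t)
      (nhdsWithin 1 (Set.Ioo (0:ℝ) 1))
      (nhds (((2*g + 1 - n : ℕ) : ℝ) * 2^(2*g+n-3))) := by
  obtain ⟨p, rfl⟩ : ∃ p, n = p + 1 := ⟨n - 1, by omega⟩
  obtain ⟨m, rfl⟩ : ∃ m, g = p + m := ⟨g - p, by omega⟩
  obtain ⟨b, hb⟩ : ∃ b, b + 1 = 2*p + m := ⟨2*p + m - 1, by omega⟩
  obtain ⟨c, hc⟩ : ∃ c, c + 2 = 3*p + 2*m := ⟨3*p + 2*m - 2, by omega⟩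
  simp only [show (p+m)+(p+1)-2 = b by omega, show (p+m)+(p+1)-1 = b+1 by omega,
    show (p+m)+1-(p+1) = m by omega, show (p+1)-1 = p by omega,
    show (p+1)-2 = p-1 by omega, show (p+m)-(p+1) = m-1 by omega,
    show 2*(p+m)+(p+1)-3 = c by omega, show 2*(p+m)+1-(p+1) = p+2*m by omega]
  refine ⟨main_id p m b hb, ?_⟩
  have hcont : Continuous (fun t : ℝ =>
      (1+t)^b * (1+t^3)^m *
        (∑ i ∈ Finset.range p, (1+t^2)^(p-1-i) * (2*t)^i) +
      (1+t)^(b+1) * (2*t)^p *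
        (∑ i ∈ Finset.range m, (1+t^3)^(m-1-i) * (t+t^2)^i)) := by
    apply Continuous.add
    · apply Continuous.mul
      · fun_prop
      · exact continuous_finset_sum _ (fun i _ => by fun_prop)
    · apply Continuous.mul
      · fun_prop
      · exact continuous_finset_sum _ (fun i _ => by fun_prop)
  have htend := (hcont.tendsto 1).mono_left
    (nhdsWithin_le_nhds (s := Set.Ioo (0:ℝ) 1))
  have heq : (fun t : ℝ =>
      (1+t)^b * (1+t^3)^m *
        (∑ i ∈ Finset.range p, (1+t^2)^(p-1-i) * (2*t)^i) +
      (1+t)^(b+1) * (2*t)^p *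
        (∑ i ∈ Finset.range m, (1+t^3)^(m-1-i) * (t+t^2)^i))
      =ᶠ[nhdsWithin 1 (Set.Ioo (0:ℝ) 1)] (fun t => (1 - t) * P2R (p+m) (p+1) t) :=
    Filter.eventuallyEq_of_mem self_mem_nhdsWithin
      (fun t ht => (main_id p m b hb t ht).symm)
  refine Filter.Tendsto.congr' heq ?_
  convert htend using 2
  exact (limit_val p m b c hb hc).symm
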